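/- If r_1 < 1 and r_{N−1} < 1, then ρ_A < 1/N and ρ_B > 1/N. Dually, if r_1 > 1 and r_{N−1} > 1, then ρ_A > 1/N and ρ_B < 1/N. (Dominance part of the classification of evolutionary scenarios: invasion scenario B←←A forces replacement scenario B⇐⇐A, and B→→A forces B⇒⇒A.) -/

import Mathlib

open Finset in
private theorem moran_aux_lt (n : ℕ) (hn : 2 ≤ n) (Q : ℕ → ℝ)
    (hQpos : ∀ k, 1 ≤ k → k ≤ n → 0 < Q k)
    (hQ1 : ∀ k, 1 ≤ k → k ≤ n → 1 < Q k) :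
    ((n:ℝ) < ∑ j ∈ Icc 1 n, ∏ k ∈ Icc 1 j, Q k) ∧
    (1 + ∑ j ∈ Icc 1 n, ∏ k ∈ Icc 1 j, Q k < ((n:ℝ)+1) * ∏ k ∈ Icc 1 n, Q k) := by
  set P : ℕ → ℝ := fun j => ∏ k ∈ Icc 1 j, Q k with hP
  have hPpos : ∀ j, j ≤ n → 0 < P j := by
    intro j hj
    exact Finset.prod_pos fun k hk => hQpos k (mem_Icc.mp hk).1 (le_trans (mem_Icc.mp hk).2 hj)
  have hP1 : ∀ j, 1 ≤ j → j ≤ n → 1 < P j := by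
    intro j hj1 hjn
    have : ∏ k ∈ Icc 1 j, (1:ℝ) < ∏ k ∈ Icc 1 j, Q k := by
      refine Finset.prod_lt_prod_of_nonempty (fun k _ => one_pos) ?_
        ⟨1, mem_Icc.mpr ⟨le_refl 1, hj1⟩⟩
      intro k hk; exact hQ1 k (mem_Icc.mp hk).1 (le_trans (mem_Icc.mp hk).2 hjn)
    simpa using this
  have hPn : ∀ j, 1 ≤ j → j ≤ n → P j ≤ P n := by
    intro j hj1 hjn
    have hsplit : P j * ∏ k ∈ Ioc j n, Q k = P n := by
      have h1 : Icc 1 j = Ioc 0 j := by exact Finset.Icc_add_one_left_eq_Ioc 0 j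
      have h2 : Icc 1 n = Ioc 0 n := by exact Finset.Icc_add_one_left_eq_Ioc 0 n
      rw [hP]; simp only [h1, h2]
      exact Finset.prod_Ioc_consecutive _ (Nat.zero_le j) hjn
    have hone : 1 ≤ ∏ k ∈ Ioc j n, Q k := by
      have : ∏ k ∈ Ioc j n, (1:ℝ) ≤ ∏ k ∈ Ioc j n, Q k := by
        refine Finset.prod_le_prod (fun k _ => zero_le_one) ?_
        intro k hk
        exact le_of_lt (hQ1 k (by have := (mem_Ioc.mp hk).1; omega) (mem_Ioc.mp hk).2)
      simpa using this
    calc P j ≤ P j * ∏ k ∈ Ioc j n, Q k := le_mul_of_one_le_right (hPpos j hjn).le hone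
    _ = P n := hsplit
  constructor
  · have : ∑ j ∈ Icc 1 n, (1:ℝ) < ∑ j ∈ Icc 1 n, P j := by
      refine Finset.sum_lt_sum_of_nonempty ⟨1, mem_Icc.mpr ⟨le_refl 1, by omega⟩⟩ ?_
      intro j hj; exact hP1 j (mem_Icc.mp hj).1 (mem_Icc.mp hj).2
    simpa [Nat.card_Icc] using this
  · have hS : ∑ j ∈ Icc 1 n, P j = (∑ j ∈ Icc 1 (n-1), P j) + P n := by
      have := Finset.sum_Icc_succ_top (f := P) (a := 1) (b := n - 1) (by omega)
      rw [show n - 1 + 1 = n by omega] at this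
      exact this
    have hS' : ∑ j ∈ Icc 1 (n-1), P j ≤ ((n:ℝ) - 1) * P n := by
      have h := Finset.sum_le_card_nsmul (Icc 1 (n-1)) P (P n)
        (fun j hj => hPn j (mem_Icc.mp hj).1 (by have := (mem_Icc.mp hj).2; omega))
      rw [Nat.card_Icc, nsmul_eq_mul] at h
      have hcast : ((n - 1 + 1 - 1 : ℕ) : ℝ) = (n:ℝ) - 1 := by
        rw [show n - 1 + 1 - 1 = n - 1 by omega, Nat.cast_sub (by omega)]; norm_num
      rw [hcast] at h; exact h
    have h1n : 1 < P n := hP1 n (by omega) le_rfl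
    calc 1 + (Icc 1 n).sum P = 1 + ((∑ j ∈ Icc 1 (n-1), P j) + P n) := by rw [hS]
    _ < ((n:ℝ)+1) * P n := by nlinarith

open Finset in
private theorem moran_aux_gt (n : ℕ) (hn : 2 ≤ n) (Q : ℕ → ℝ)
    (hQpos : ∀ k, 1 ≤ k → k ≤ n → 0 < Q k)
    (hQ1 : ∀ k, 1 ≤ k → k ≤ n → Q k < 1) :
    (∑ j ∈ Icc 1 n, ∏ k ∈ Icc 1 j, Q k < (n:ℝ)) ∧
    (((n:ℝ)+1) * ∏ k ∈ Icc 1 n, Q k < 1 + ∑ j ∈ Icc 1 n, ∏ k ∈ Icc 1 j, Q k) := by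
  set P : ℕ → ℝ := fun j => ∏ k ∈ Icc 1 j, Q k with hP
  have hPpos : ∀ j, j ≤ n → 0 < P j := by
    intro j hj
    exact Finset.prod_pos fun k hk => hQpos k (mem_Icc.mp hk).1 (le_trans (mem_Icc.mp hk).2 hj)
  have hP1 : ∀ j, 1 ≤ j → j ≤ n → P j < 1 := by
    intro j hj1 hjn
    have : ∏ k ∈ Icc 1 j, Q k < ∏ k ∈ Icc 1 j, (1:ℝ) := by
      refine Finset.prod_lt_prod_of_nonempty
        (fun k hk => hQpos k (mem_Icc.mp hk).1 (le_trans (mem_Icc.mp hk).2 hjn)) ?_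
        ⟨1, mem_Icc.mpr ⟨le_refl 1, hj1⟩⟩
      intro k hk; exact hQ1 k (mem_Icc.mp hk).1 (le_trans (mem_Icc.mp hk).2 hjn)
    simpa using this
  have hPn : ∀ j, 1 ≤ j → j ≤ n → P n ≤ P j := by
    intro j hj1 hjn
    have hsplit : P j * ∏ k ∈ Ioc j n, Q k = P n := by
      have h1 : Icc 1 j = Ioc 0 j := by exact Finset.Icc_add_one_left_eq_Ioc 0 j
      have h2 : Icc 1 n = Ioc 0 n := by exact Finset.Icc_add_one_left_eq_Ioc 0 n
      rw [hP]; simp only [h1, h2]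
      exact Finset.prod_Ioc_consecutive _ (Nat.zero_le j) hjn
    have hone : ∏ k ∈ Ioc j n, Q k ≤ 1 := by
      have : ∏ k ∈ Ioc j n, Q k ≤ ∏ k ∈ Ioc j n, (1:ℝ) := by
        refine Finset.prod_le_prod
          (fun k hk => (hQpos k (by have := (mem_Ioc.mp hk).1; omega) (mem_Ioc.mp hk).2).le) ?_
        intro k hk
        exact le_of_lt (hQ1 k (by have := (mem_Ioc.mp hk).1; omega) (mem_Ioc.mp hk).2)
      simpa using this
    calc P n = P j * ∏ k ∈ Ioc j n, Q k := hsplit.symm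
    _ ≤ P j := mul_le_of_le_one_right (hPpos j hjn).le hone
  constructor
  · have : ∑ j ∈ Icc 1 n, P j < ∑ j ∈ Icc 1 n, (1:ℝ) := by
      refine Finset.sum_lt_sum_of_nonempty ⟨1, mem_Icc.mpr ⟨le_refl 1, by omega⟩⟩ ?_
      intro j hj; exact hP1 j (mem_Icc.mp hj).1 (mem_Icc.mp hj).2
    simpa [Nat.card_Icc] using this
  · have hS : ∑ j ∈ Icc 1 n, P j = (∑ j ∈ Icc 1 (n-1), P j) + P n := by
      have := Finset.sum_Icc_succ_top (f := P) (a := 1) (b := n - 1) (by omega)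
      rw [show n - 1 + 1 = n by omega] at this
      exact this
    have hS' : ((n:ℝ) - 1) * P n ≤ ∑ j ∈ Icc 1 (n-1), P j := by
      have h := Finset.card_nsmul_le_sum (Icc 1 (n-1)) P (P n)
        (fun j hj => hPn j (mem_Icc.mp hj).1 (by have := (mem_Icc.mp hj).2; omega))
      rw [Nat.card_Icc, nsmul_eq_mul] at h
      have hcast : ((n - 1 + 1 - 1 : ℕ) : ℝ) = (n:ℝ) - 1 := by
        rw [show n - 1 + 1 - 1 = n - 1 by omega, Nat.cast_sub (by omega)]; norm_num
      rw [hcast] at h; exact h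
    have h1n : P n < 1 := hP1 n (by omega) le_rfl
    calc ((n:ℝ)+1) * P n < 1 + ((∑ j ∈ Icc 1 (n-1), P j) + P n) := by nlinarith
    _ = 1 + (Icc 1 n).sum P := by rw [hS]

private theorem moran_affine_pos (u v M x : ℝ) (hM : 3 ≤ M) (hx1 : 1 ≤ x) (hx2 : x ≤ M - 1)
    (h1 : 0 < u * 1 + v) (hn : 0 < u * (M - 1) + v) : 0 < u * x + v := by
  rcases eq_or_lt_of_le hx1 with h | h
  · rw [← h]; simpa using h1
  · nlinarith [mul_nonneg (by linarith : (0:ℝ) ≤ M - 1 - x) h1.le,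
      mul_pos (by linarith : (0:ℝ) < x - 1) hn]

set_option maxHeartbeats 1000000 in
/-- dominance scenarios: if r_1 < 1 and r_{N-1} < 1 then
ρ_A < 1/N and ρ_B > 1/N; dually, if r_1 > 1 and r_{N-1} > 1 then
ρ_A > 1/N and ρ_B < 1/N. -/
theorem moran_dominance_scenarios
    (N : ℕ) (hN : 3 ≤ N) (a b c d w : ℝ)
    (ha : 0 < a) (hb : 0 < b) (hc : 0 < c) (hd : 0 < d)
    (hw0 : 0 ≤ w) (hw1 : w ≤ 1)
    (r : ℕ → ℝ)
    (hr : ∀ i, 1 ≤ i → i ≤ N - 1 →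
      r i = (1 - w + w * (a * ((i : ℝ) - 1) / ((N : ℝ) - 1) +
                b * ((N : ℝ) - (i : ℝ)) / ((N : ℝ) - 1))) /
            (1 - w + w * (c * (i : ℝ) / ((N : ℝ) - 1) +
                d * ((N : ℝ) - (i : ℝ) - 1) / ((N : ℝ) - 1))))
    (hrpos : ∀ i, 1 ≤ i → i ≤ N - 1 → 0 < r i)
    (π : ℕ → ℝ) (hπ0 : π 0 = 0) (hπN : π N = 1)
    (hπ : ∀ i, 1 ≤ i → i ≤ N - 1 →
      π i = (1 + ∑ j ∈ Finset.Icc 1 (i - 1), ∏ k ∈ Finset.Icc 1 j, (r k)⁻¹) /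
            (1 + ∑ j ∈ Finset.Icc 1 (N - 1), ∏ k ∈ Finset.Icc 1 j, (r k)⁻¹)) :
    (r 1 < 1 → r (N - 1) < 1 → π 1 < 1 / (N : ℝ) ∧ 1 / (N : ℝ) < 1 - π (N - 1)) ∧
    (1 < r 1 → 1 < r (N - 1) → 1 / (N : ℝ) < π 1 ∧ 1 - π (N - 1) < 1 / (N : ℝ)) := by
  set n := N - 1 with hn
  have hn2 : 2 ≤ n := by omega
  have hNn : N = n + 1 := by omega
  have hM3 : (3:ℝ) ≤ (N:ℝ) := by exact_mod_cast hN
  have hMn : ((n:ℕ):ℝ) = (N:ℝ) - 1 := by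
    rw [hn, Nat.cast_sub (by omega)]; norm_num
  set M : ℝ := (N:ℝ) with hM
  -- the sum S and its positivity
  set S : ℝ := ∑ j ∈ Finset.Icc 1 n, ∏ k ∈ Finset.Icc 1 j, (r k)⁻¹ with hSdef
  have hQpos : ∀ k, 1 ≤ k → k ≤ n → 0 < (r k)⁻¹ :=
    fun k h1 h2 => inv_pos.mpr (hrpos k h1 h2)
  have hSpos : 0 < S := by
    refine Finset.sum_pos ?_ ⟨1, Finset.mem_Icc.mpr ⟨le_refl 1, by omega⟩⟩
    intro j hj
    refine Finset.prod_pos fun k hk => ?_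
    have hkj := Finset.mem_Icc.mp hk
    have hjn := Finset.mem_Icc.mp hj
    exact hQpos k hkj.1 (le_trans hkj.2 hjn.2)
  -- value of π 1
  have hπ1 : π 1 = 1 / (1 + S) := by
    rw [hπ 1 (le_refl 1) (by omega)]
    norm_num
  -- value of 1 - π (N-1)
  have h1S : (0:ℝ) < 1 + S := by linarith
  have hSsplit : S = (∑ j ∈ Finset.Icc 1 (n-1), ∏ k ∈ Finset.Icc 1 j, (r k)⁻¹)
      + ∏ k ∈ Finset.Icc 1 n, (r k)⁻¹ := by
    have := Finset.sum_Icc_succ_top (f := fun j => ∏ k ∈ Finset.Icc 1 j, (r k)⁻¹)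
      (a := 1) (b := n - 1) (by omega)
    rw [show n - 1 + 1 = n by omega] at this
    exact this
  have hπn : 1 - π n = (∏ k ∈ Finset.Icc 1 n, (r k)⁻¹) / (1 + S) := by
    rw [hπ n (by omega) (le_refl n)]
    rw [eq_div_iff (ne_of_gt h1S), sub_mul, one_mul, div_mul_cancel₀ _ (ne_of_gt h1S)]
    linarith [hSsplit]
  -- denominator positivity of the fitness ratio
  have hG : ∀ i : ℕ, 1 ≤ i → i ≤ n → 0 < w → 0 <
      1 - w + w * (c * (i:ℝ) / (M - 1) + d * (M - (i:ℝ) - 1) / (M - 1)) := by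
    intro i hi1 hin hw
    have hi1' : (1:ℝ) ≤ (i:ℝ) := by exact_mod_cast hi1
    have hin' : (i:ℝ) ≤ M - 1 := by rw [← hMn]; exact_mod_cast hin
    have hM1 : (0:ℝ) < M - 1 := by linarith
    have hpos1 : 0 < c * (i:ℝ) / (M - 1) := div_pos (by nlinarith) hM1
    have hpos2 : 0 ≤ d * (M - (i:ℝ) - 1) / (M - 1) :=
      div_nonneg (mul_nonneg hd.le (by linarith)) hM1.le
    nlinarith [mul_pos hw
      (by linarith : (0:ℝ) < c * (i:ℝ) / (M - 1) + d * (M - (i:ℝ) - 1) / (M - 1))]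
  -- the sign iff
  have hiff : ∀ i : ℕ, 1 ≤ i → i ≤ n → 0 < w → (r i < 1 ↔
      a * ((i:ℝ) - 1) + b * (M - (i:ℝ)) < c * (i:ℝ) + d * (M - (i:ℝ) - 1)) := by
    intro i hi1 hin hw
    rw [hr i hi1 (by omega), div_lt_one (hG i hi1 hin hw), add_lt_add_iff_left,
      mul_lt_mul_iff_right₀ hw, ← add_div, ← add_div,
      div_lt_div_iff_of_pos_right (by linarith : (0:ℝ) < M - 1)]
  have hiff' : ∀ i : ℕ, 1 ≤ i → i ≤ n → 0 < w → (1 < r i ↔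
      c * (i:ℝ) + d * (M - (i:ℝ) - 1) < a * ((i:ℝ) - 1) + b * (M - (i:ℝ))) := by
    intro i hi1 hin hw
    rw [hr i hi1 (by omega), one_lt_div (hG i hi1 hin hw), add_lt_add_iff_left,
      mul_lt_mul_iff_right₀ hw, ← add_div, ← add_div,
      div_lt_div_iff_of_pos_right (by linarith : (0:ℝ) < M - 1)]
  constructor
  · intro h1 hn1
    have hw : 0 < w := by
      rcases hw0.eq_or_lt with h | h
      · exfalso
        have h' := hr 1 (le_refl 1) (by omega)
        rw [← h] at h'
        norm_num at h'
        rw [h'] at h1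
        exact lt_irrefl 1 h1
      · exact h
    have key : ∀ k, 1 ≤ k → k ≤ n → r k < 1 := by
      intro k hk1 hkn
      rw [hiff k hk1 hkn hw]
      have hk1' : (1:ℝ) ≤ (k:ℝ) := by exact_mod_cast hk1
      have hkn' : (k:ℝ) ≤ M - 1 := by rw [← hMn]; exact_mod_cast hkn
      have e1 := (hiff 1 (le_refl 1) (by omega) hw).mp h1
      have en := (hiff n (by omega) (le_refl n) hw).mp hn1
      push_cast at e1
      rw [hMn] at en
      have := moran_affine_pos (c - d - a + b) (d * M - d + a - b * M) M (k:ℝ)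
        hM3 hk1' hkn' (by linarith) (by linarith)
      linarith
    have hQ1 : ∀ k, 1 ≤ k → k ≤ n → 1 < (r k)⁻¹ :=
      fun k hk1 hkn => (one_lt_inv₀ (hrpos k hk1 hkn)).mpr (key k hk1 hkn)
    obtain ⟨hA, hB⟩ := moran_aux_lt n hn2 (fun k => (r k)⁻¹) hQpos hQ1
    rw [← hSdef] at hA hB
    rw [hMn] at hA hB
    constructor
    · rw [hπ1]
      exact one_div_lt_one_div_of_lt (by linarith) (by linarith)
    · rw [hπn]
      rw [div_lt_div_iff₀ (by linarith) h1S]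
      linarith
  · intro h1 hn1
    have hw : 0 < w := by
      rcases hw0.eq_or_lt with h | h
      · exfalso
        have h' := hr 1 (le_refl 1) (by omega)
        rw [← h] at h'
        norm_num at h'
        rw [h'] at h1
        exact lt_irrefl 1 h1
      · exact h
    have key : ∀ k, 1 ≤ k → k ≤ n → 1 < r k := by
      intro k hk1 hkn
      rw [hiff' k hk1 hkn hw]
      have hk1' : (1:ℝ) ≤ (k:ℝ) := by exact_mod_cast hk1
      have hkn' : (k:ℝ) ≤ M - 1 := by rw [← hMn]; exact_mod_cast hkn
      have e1 := (hiff' 1 (le_refl 1) (by omega) hw).mp h1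
      have en := (hiff' n (by omega) (le_refl n) hw).mp hn1
      push_cast at e1
      rw [hMn] at en
      have := moran_affine_pos (a + d - b - c) (b * M - d * M + d - a) M (k:ℝ)
        hM3 hk1' hkn' (by linarith) (by linarith)
      linarith
    have hQ1 : ∀ k, 1 ≤ k → k ≤ n → (r k)⁻¹ < 1 :=
      fun k hk1 hkn => inv_lt_one_of_one_lt₀ (key k hk1 hkn)
    obtain ⟨hA, hB⟩ := moran_aux_gt n hn2 (fun k => (r k)⁻¹) hQpos hQ1
    rw [← hSdef] at hA hB
    rw [hMn] at hA hB
    constructor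
    · rw [hπ1]
      exact one_div_lt_one_div_of_lt h1S (by linarith)
    · rw [hπn]
      rw [div_lt_div_iff₀ h1S (by linarith)]
      linarith
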